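/- arXiv:2604.27690 — 6 statements merged into one kernel-verified Lean document; each statement's English description precedes it below -/
import Mathlib

section
/- There is a constant C > 0 such that for every n ≥ 1 there is a deterministic online coloring algorithm for graphs on n vertices (a family of functions A_t : SimpleGraph (Fin (t+1)) → ℕ for t < n) with the property that for every simple graph G on Fin n whose odd girth is at least 7 (i.e. G contains no cycle of odd length less than 7), the induced coloring c(v) = A_v(G_v) is a proper coloring of G using at most C · n^(1/2) colors. -/
open SimpleGraph

/-! ### Auxiliary definitions: the online algorithm

`backNbrs G v` is the set of neighbours of `v` that arrived before `v`;
`isCtr G k v` says that `v` is declared a "center" (it has at least `k` earlier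
neighbours and is not at visible distance 2 from any earlier center);
`col G k v` is the color assigned to `v` by the online algorithm. -/

open scoped Classical in
noncomputable def backNbrs {m : ℕ} (G : SimpleGraph (Fin m)) (v : Fin m) : Finset (Fin m) :=
  Finset.univ.filter (fun a => a < v ∧ G.Adj a v)

noncomputable def backDeg {m : ℕ} (G : SimpleGraph (Fin m)) (v : Fin m) : ℕ :=
  (backNbrs G v).card

lemma mem_backNbrs {m : ℕ} {G : SimpleGraph (Fin m)} {v a : Fin m} :
    a ∈ backNbrs G v ↔ a < v ∧ G.Adj a v := by
  classical
  simp [backNbrs]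

def dist2 {m : ℕ} (G : SimpleGraph (Fin m)) (v u : Fin m) : Prop :=
  ∃ a, a < v ∧ G.Adj a v ∧ G.Adj a u

def isCtr {m : ℕ} (G : SimpleGraph (Fin m)) (k : ℕ) (v : Fin m) : Prop :=
  k ≤ backDeg G v ∧ ∀ u, u < v → isCtr G k u → ¬ dist2 G v u
termination_by v.1
decreasing_by exact ‹u < v›

open scoped Classical in
noncomputable def col {m : ℕ} (G : SimpleGraph (Fin m)) (k : ℕ) (v : Fin m) : ℕ :=
  if (∃ u, u < v ∧ isCtr G k u ∧ dist2 G v u)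
  then k + sInf {j : ℕ | ∃ u : Fin m, u.1 = j ∧ u < v ∧ isCtr G k u ∧ dist2 G v u}
  else if k ≤ backDeg G v then k + v.1
  else sInf {c : ℕ | c < k ∧ ∀ a, a < v → G.Adj a v → col G k a ≠ c}
termination_by v.1
decreasing_by exact ‹a < v›

open scoped Classical in
noncomputable def ctrSet {n : ℕ} (G : SimpleGraph (Fin n)) (k : ℕ) : Finset (Fin n) :=
  Finset.univ.filter (isCtr G k)

variable {m n k : ℕ}

lemma finStrongInd {P : Fin m → Prop} (H : ∀ v, (∀ u, u < v → P u) → P v) :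
    ∀ v, P v := fun v => H v (fun u _ => finStrongInd H u)
termination_by v => v.1
decreasing_by exact ‹u < v›

lemma lt_castLE_pull (h : m ≤ n) {v : Fin m} {b : Fin n} (hb : b < Fin.castLE h v) :
    ∃ a : Fin m, Fin.castLE h a = b ∧ a < v := by
  have h1 : b.1 < v.1 := hb
  exact ⟨⟨b.1, h1.trans v.isLt⟩, by ext; simp, h1⟩

/-! ### Prefix invariance: the algorithm's decisions on an induced prefix of the
graph agree with its decisions on the full graph. -/

lemma backDeg_comap (h : m ≤ n) (G : SimpleGraph (Fin n)) (v : Fin m) :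
    backDeg (G.comap (Fin.castLE h)) v = backDeg G (Fin.castLE h v) := by
  classical
  unfold backDeg
  apply Finset.card_bij (fun a _ => Fin.castLE h a)
  · intro a ha
    rw [mem_backNbrs] at ha ⊢
    exact ⟨ha.1, ha.2⟩
  · intro a _ b _ hab
    exact Fin.castLE_injective h hab
  · intro b hb
    rw [mem_backNbrs] at hb
    obtain ⟨a, rfl, ha⟩ := lt_castLE_pull h hb.1
    exact ⟨a, mem_backNbrs.2 ⟨ha, hb.2⟩, rfl⟩

lemma dist2_comap (h : m ≤ n) (G : SimpleGraph (Fin n)) (v u : Fin m) :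
    dist2 (G.comap (Fin.castLE h)) v u ↔ dist2 G (Fin.castLE h v) (Fin.castLE h u) := by
  constructor
  · rintro ⟨a, hav, h1, h2⟩
    exact ⟨Fin.castLE h a, hav, h1, h2⟩
  · rintro ⟨b, hbv, h1, h2⟩
    obtain ⟨a, rfl, ha⟩ := lt_castLE_pull h hbv
    exact ⟨a, ha, h1, h2⟩

lemma isCtr_comap (h : m ≤ n) (G : SimpleGraph (Fin n)) :
    ∀ v : Fin m, (isCtr (G.comap (Fin.castLE h)) k v ↔ isCtr G k (Fin.castLE h v)) := by
  refine finStrongInd (fun v IH => ?_)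
  rw [isCtr, isCtr, backDeg_comap h]
  refine and_congr Iff.rfl ?_
  constructor
  · intro H u hu hctr hd
    obtain ⟨a, rfl, ha⟩ := lt_castLE_pull h hu
    exact H a ha ((IH a ha).2 hctr) ((dist2_comap h G v a).2 hd)
  · intro H u hu hctr hd
    exact H (Fin.castLE h u) hu ((IH u hu).1 hctr) ((dist2_comap h G v u).1 hd)

lemma col_comap (h : m ≤ n) (G : SimpleGraph (Fin n)) :
    ∀ v : Fin m, col (G.comap (Fin.castLE h)) k v = col G k (Fin.castLE h v) := by
  refine finStrongInd (fun v IH => ?_)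
  rw [col, col, backDeg_comap h]
  have hEx : (∃ u, u < v ∧ isCtr (G.comap (Fin.castLE h)) k u ∧ dist2 (G.comap (Fin.castLE h)) v u)
      ↔ (∃ u, u < Fin.castLE h v ∧ isCtr G k u ∧ dist2 G (Fin.castLE h v) u) := by
    constructor
    · rintro ⟨u, h1, h2, h3⟩
      exact ⟨Fin.castLE h u, h1, (isCtr_comap h G u).1 h2, (dist2_comap h G v u).1 h3⟩
    · rintro ⟨u, h1, h2, h3⟩
      obtain ⟨a, rfl, ha⟩ := lt_castLE_pull h h1
      exact ⟨a, ha, (isCtr_comap h G a).2 h2, (dist2_comap h G v a).2 h3⟩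
  have hSet : {j : ℕ | ∃ u : Fin m, u.1 = j ∧ u < v ∧ isCtr (G.comap (Fin.castLE h)) k u ∧ dist2 (G.comap (Fin.castLE h)) v u}
      = {j : ℕ | ∃ u : Fin n, u.1 = j ∧ u < Fin.castLE h v ∧ isCtr G k u ∧ dist2 G (Fin.castLE h v) u} := by
    ext j
    constructor
    · rintro ⟨u, rfl, h1, h2, h3⟩
      exact ⟨Fin.castLE h u, rfl, h1, (isCtr_comap h G u).1 h2, (dist2_comap h G v u).1 h3⟩
    · rintro ⟨u, rfl, h1, h2, h3⟩
      obtain ⟨a, rfl, ha⟩ := lt_castLE_pull h h1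
      exact ⟨a, rfl, ha, (isCtr_comap h G a).2 h2, (dist2_comap h G v a).2 h3⟩
  have hSet2 : {c : ℕ | c < k ∧ ∀ a, a < v → (G.comap (Fin.castLE h)).Adj a v → col (G.comap (Fin.castLE h)) k a ≠ c}
      = {c : ℕ | c < k ∧ ∀ a, a < Fin.castLE h v → G.Adj a (Fin.castLE h v) → col G k a ≠ c} := by
    ext c
    refine and_congr Iff.rfl ?_
    constructor
    · intro H a ha hadj
      obtain ⟨b, rfl, hb⟩ := lt_castLE_pull h ha
      rw [← IH b hb]
      exact H b hb hadj
    · intro H a ha hadj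
      rw [IH a ha]
      exact H (Fin.castLE h a) ha hadj
  rw [hSet, hSet2]
  by_cases hc : (∃ u, u < Fin.castLE h v ∧ isCtr G k u ∧ dist2 G (Fin.castLE h v) u)
  · rw [if_pos (hEx.2 hc), if_pos hc]
  · rw [if_neg (fun x => hc (hEx.1 x)), if_neg hc]
    rfl

/-- The coloring produced by running the deterministic online algorithm `A`
(one function per arrival time `t < n`) on the graph `G`: vertex `v` is colored
by applying `A v` to the induced subgraph of `G` on the vertices `{0, …, v}`. -/
def onlineColoring {n : ℕ} (A : (t : Fin n) → SimpleGraph (Fin (t.1 + 1)) → ℕ)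
    (G : SimpleGraph (Fin n)) (v : Fin n) : ℕ :=
  A v (G.comap (Fin.castLE v.isLt))

/-- `c` is a proper coloring of `G` using at most `m` colors. -/
def ProperlyColorsWithin {n : ℕ} (G : SimpleGraph (Fin n)) (c : Fin n → ℕ) (m : ℝ) : Prop :=
  (∀ u v : Fin n, G.Adj u v → c u ≠ c v) ∧ ((Finset.univ.image c).card : ℝ) ≤ m

/-- The odd girth of `G` is at least `g`: `G` has no cycle of odd length less than `g`. -/
def OddGirthAtLeast {V : Type*} (G : SimpleGraph V) (g : ℝ) : Prop :=
  ∀ (v : V) (w : G.Walk v v), w.IsCycle → Odd w.length → g ≤ (w.length : ℝ)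

/-! ### Consequences of odd girth at least 7 -/

lemma no_triangle {V : Type*} {G : SimpleGraph V} (hg : OddGirthAtLeast G 7) {x y z : V}
    (h1 : G.Adj x y) (h2 : G.Adj y z) (h3 : G.Adj z x) : False := by
  have hxz : x ≠ z := fun h => G.loopless.irrefl z (h ▸ h3)
  let w : G.Walk x x := .cons h1 (.cons h2 (.cons h3 .nil))
  have hc : w.IsCycle := by
    simp only [w, Walk.isCycle_def, Walk.isTrail_def, Walk.edges_cons, Walk.edges_nil,
      Walk.support_cons, Walk.support_nil, List.tail_cons, List.nodup_cons, List.nodup_nil,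
      List.mem_cons, List.mem_singleton, List.not_mem_nil, Sym2.eq_iff, List.pairwise_cons,
      List.Pairwise.nil, ne_eq]
    refine ⟨?_, by simp [w], ?_⟩ <;>
      simp_all [h1.ne, h2.ne, h3.ne, h1.ne', h2.ne', h3.ne', hxz, hxz.symm]
  have hlen : w.length = 3 := rfl
  have := hg x w hc (by rw [hlen]; exact ⟨1, rfl⟩)
  rw [hlen] at this
  norm_num at this

lemma no_pentagon {V : Type*} {G : SimpleGraph V} (hg : OddGirthAtLeast G 7) {a b c d e : V}
    (h1 : G.Adj a b) (h2 : G.Adj b c) (h3 : G.Adj c d) (h4 : G.Adj d e) (h5 : G.Adj e a)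
    (hac : a ≠ c) (had : a ≠ d) (hbd : b ≠ d) (hbe : b ≠ e) (hce : c ≠ e) : False := by
  let w : G.Walk a a := .cons h1 (.cons h2 (.cons h3 (.cons h4 (.cons h5 .nil))))
  have hc : w.IsCycle := by
    simp only [w, Walk.isCycle_def, Walk.isTrail_def, Walk.edges_cons, Walk.edges_nil,
      Walk.support_cons, Walk.support_nil, List.tail_cons, List.nodup_cons, List.nodup_nil,
      List.mem_cons, List.mem_singleton, List.not_mem_nil, Sym2.eq_iff, List.pairwise_cons,
      List.Pairwise.nil, ne_eq]
    refine ⟨?_, by simp [w], ?_⟩ <;>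
      simp_all [h1.ne, h2.ne, h3.ne, h4.ne, h5.ne, h1.ne', h2.ne', h3.ne', h4.ne', h5.ne',
        hac, had, hbd, hbe, hce, hac.symm, had.symm, hbd.symm, hbe.symm, hce.symm]
  have hlen : w.length = 5 := rfl
  have := hg a w hc (by rw [hlen]; exact ⟨2, rfl⟩)
  rw [hlen] at this
  norm_num at this

lemma key5 {G : SimpleGraph (Fin n)} (hg : OddGirthAtLeast G 7) {u v w a b : Fin n}
    (huv : G.Adj u v) (hav : G.Adj a v) (haw : G.Adj a w) (hbu : G.Adj b u) (hbw : G.Adj b w)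
    (huw : u ≠ w) (hvw : v ≠ w) : False := by
  by_cases hab : a = b
  · subst hab
    exact no_triangle hg huv hav.symm hbu
  by_cases hau : a = u
  · subst hau
    exact no_triangle hg hbu.symm hbw haw.symm
  by_cases hbv : b = v
  · subst hbv
    exact no_triangle hg hav.symm haw hbw.symm
  · exact no_pentagon hg hbw.symm hbu huv hav.symm haw
      (Ne.symm huw) (Ne.symm hvw) hbv (fun h => hab h.symm) (fun h => hau h.symm)

/-! ### Correctness of the algorithm -/

lemma col_spec (G : SimpleGraph (Fin n)) (k : ℕ) (v : Fin n) :
    (col G k v < k ∧ ∀ a, a < v → G.Adj a v → col G k a ≠ col G k v) ∨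
    (∃ w : Fin n, isCtr G k w ∧ col G k v = k + w.1 ∧ (w = v ∨ (w < v ∧ dist2 G v w))) := by
  classical
  rw [col]
  split_ifs with h1 h2
  · right
    obtain ⟨u0, hu0⟩ := h1
    have hne : {j : ℕ | ∃ u : Fin n, u.1 = j ∧ u < v ∧ isCtr G k u ∧ dist2 G v u}.Nonempty :=
      ⟨u0.1, u0, rfl, hu0⟩
    obtain ⟨w, hw1, hw2, hw3, hw4⟩ := Nat.sInf_mem hne
    exact ⟨w, hw3, by rw [hw1], Or.inr ⟨hw2, hw4⟩⟩
  · right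
    refine ⟨v, ?_, rfl, Or.inl rfl⟩
    rw [isCtr]
    exact ⟨h2, fun u hu hc hd => h1 ⟨u, hu, hc, hd⟩⟩
  · left
    have hlt : backDeg G v < k := lt_of_not_ge h2
    set T := (backNbrs G v).image (col G k) with hT
    have hTcard : T.card < k := lt_of_le_of_lt Finset.card_image_le hlt
    have hns : ¬ (Finset.range k ⊆ T) := fun hsub => by
      have := Finset.card_le_card hsub
      rw [Finset.card_range] at this
      omega
    obtain ⟨c, hc1, hc2⟩ := Finset.not_subset.1 hns
    have hcS : c ∈ {c : ℕ | c < k ∧ ∀ a, a < v → G.Adj a v → col G k a ≠ c} := by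
      refine ⟨Finset.mem_range.1 hc1, fun a ha hadj hcol => hc2 ?_⟩
      exact Finset.mem_image.2 ⟨a, mem_backNbrs.2 ⟨ha, hadj⟩, hcol⟩
    have hmem := Nat.sInf_mem ⟨c, hcS⟩
    exact ⟨hmem.1, hmem.2⟩

lemma col_ne {G : SimpleGraph (Fin n)} (hg : OddGirthAtLeast G 7) {u v : Fin n}
    (huv : u < v) (hadj : G.Adj u v) : col G k u ≠ col G k v := by
  rcases col_spec G k v with ⟨_, H⟩ | ⟨w, hwc, hcv, hwv⟩
  · exact H u huv hadj
  · rcases col_spec G k u with ⟨hlt, _⟩ | ⟨w', hwc', hcu, hww'⟩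
    · rw [hcv]; omega
    · rw [hcu, hcv]
      intro he
      have hww : w' = w := Fin.ext (by omega)
      subst hww
      rcases hwv with hwv | ⟨hwlt, a, halt, hav, haw⟩
      · rcases hww' with hww' | ⟨hlt', _⟩
        · rw [hww'] at hwv
          exact absurd hwv (Fin.ne_of_lt huv)
        · rw [hwv] at hlt'
          exact absurd (hlt'.trans huv) (lt_irrefl v)
      · rcases hww' with hww' | ⟨hw'lt, b, hblt, hbu, hbw⟩
        · subst hww'
          exact no_triangle hg hadj hav.symm haw
        · exact key5 hg hadj hav haw hbu hbw (ne_of_gt hw'lt) (ne_of_gt hwlt)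

/-! ### Counting the colors -/

lemma card_image_col_le (G : SimpleGraph (Fin n)) (k : ℕ) :
    (Finset.univ.image (col G k)).card ≤ k + (ctrSet G k).card := by
  classical
  have hsub : Finset.univ.image (col G k) ⊆
      Finset.range k ∪ (ctrSet G k).image (fun w => k + w.1) := by
    intro c hc
    obtain ⟨v, _, rfl⟩ := Finset.mem_image.1 hc
    rcases col_spec G k v with ⟨h, _⟩ | ⟨w, hw, hcv, _⟩
    · exact Finset.mem_union_left _ (Finset.mem_range.2 h)
    · refine Finset.mem_union_right _ (Finset.mem_image.2 ⟨w, ?_, hcv.symm⟩)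
      unfold ctrSet
      exact Finset.mem_filter.2 ⟨Finset.mem_univ _, hw⟩
  calc (Finset.univ.image (col G k)).card
      ≤ (Finset.range k ∪ (ctrSet G k).image (fun w => k + w.1)).card :=
        Finset.card_le_card hsub
    _ ≤ (Finset.range k).card + ((ctrSet G k).image (fun w => k + w.1)).card :=
        Finset.card_union_le _ _
    _ ≤ k + (ctrSet G k).card := by
        rw [Finset.card_range]
        exact Nat.add_le_add_left Finset.card_image_le _

lemma ctrs_card (G : SimpleGraph (Fin n)) (k : ℕ) : (ctrSet G k).card * k ≤ n := by
  classical
  have hmem : ∀ w, w ∈ ctrSet G k ↔ isCtr G k w := by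
    intro w
    unfold ctrSet
    simp
  have hdisj : ∀ u ∈ ctrSet G k, ∀ w ∈ ctrSet G k, u ≠ w →
      Disjoint (backNbrs G u) (backNbrs G w) := by
    intro u hu w hw huw
    rw [Finset.disjoint_left]
    intro a hau haw
    rw [mem_backNbrs] at hau haw
    rw [hmem] at hu hw
    rcases lt_or_gt_of_ne huw with h | h
    · have hW := hw
      rw [isCtr] at hW
      exact hW.2 u h hu ⟨a, hau.1.trans h, haw.2, hau.2⟩
    · have hU := hu
      rw [isCtr] at hU
      exact hU.2 w h hw ⟨a, haw.1.trans h, hau.2, haw.2⟩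
  have hsum : (ctrSet G k).card * k ≤ ∑ w ∈ ctrSet G k, (backNbrs G w).card := by
    rw [← smul_eq_mul]
    apply Finset.card_nsmul_le_sum
    intro w hw
    rw [hmem] at hw
    rw [isCtr] at hw
    exact hw.1
  calc (ctrSet G k).card * k ≤ ∑ w ∈ ctrSet G k, (backNbrs G w).card := hsum
    _ = ((ctrSet G k).biUnion (backNbrs G)).card := (Finset.card_biUnion hdisj).symm
    _ ≤ (Finset.univ : Finset (Fin n)).card := Finset.card_le_univ _
    _ = n := by simp

/-- Kierstead's theorem: graphs with odd girth at least 7 can be deterministically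
colored online using `O(n^(1/2))` colors. -/
theorem online_coloring_of_odd_girth_7 :
    ∃ C : ℝ, 0 < C ∧
      ∀ n : ℕ, 1 ≤ n →
        ∃ A : (t : Fin n) → SimpleGraph (Fin (t.1 + 1)) → ℕ,
          ∀ G : SimpleGraph (Fin n), OddGirthAtLeast G 7 →
            ProperlyColorsWithin G (onlineColoring A G) (C * (n : ℝ) ^ ((1 : ℝ) / 2)) := by
  refine ⟨4, by norm_num, fun n hn => ?_⟩
  set k := n.sqrt + 1 with hk
  refine ⟨fun t H => col H k (Fin.last t.1), fun G hg => ?_⟩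
  have hcol : ∀ v : Fin n, onlineColoring (fun t H => col H k (Fin.last t.1)) G v = col G k v := by
    intro v
    show col (G.comap (Fin.castLE v.isLt)) k (Fin.last v.1) = col G k v
    rw [col_comap v.isLt G (Fin.last v.1)]
    have : Fin.castLE v.isLt (Fin.last v.1) = v := Fin.ext (by simp)
    rw [this]
  constructor
  · intro u v hadj
    rw [hcol u, hcol v]
    rcases lt_trichotomy u v with h | h | h
    · exact col_ne hg h hadj
    · exact absurd h hadj.ne
    · exact (col_ne hg h hadj.symm).symm
  · have himg : Finset.univ.image (onlineColoring (fun t H => col H k (Fin.last t.1)) G)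
        = Finset.univ.image (col G k) := Finset.image_congr (fun x _ => hcol x)
    rw [himg]
    have h1 := card_image_col_le G k
    have h2 : (ctrSet G k).card ≤ n.sqrt := by
      by_contra hcon
      push_neg at hcon
      have hc := ctrs_card G k
      have h3 : n < (n.sqrt + 1) * (n.sqrt + 1) := Nat.lt_succ_sqrt n
      have h4 : (n.sqrt + 1) * (n.sqrt + 1) ≤ (ctrSet G k).card * k :=
        Nat.mul_le_mul hcon (le_refl k)
      omega
    have hnat : (Finset.univ.image (col G k)).card ≤ 2 * n.sqrt + 1 := by omega
    have hs : (n.sqrt : ℝ) ≤ Real.sqrt n := Real.nat_sqrt_le_real_sqrt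
    have h1n : (1 : ℝ) ≤ Real.sqrt n := by
      rw [show (1:ℝ) = Real.sqrt 1 by simp]
      exact Real.sqrt_le_sqrt (by exact_mod_cast hn)
    rw [← Real.sqrt_eq_rpow]
    have hcast : ((Finset.univ.image (col G k)).card : ℝ) ≤ 2 * (n.sqrt : ℝ) + 1 := by
      exact_mod_cast hnat
    linarith
end

section
/- Let k ≥ 1 and n ≥ 1 be integers, let G be a simple graph on Fin n with girth at least 2k+1 (i.e. G contains no cycle of length at most 2k), and let c : Fin n → ℕ be a First-Fit coloring of G with respect to the natural order on Fin n, meaning: for every vertex v, (i) c(u) ≠ c(v) for every u < v adjacent to v, and (ii) for every color j < c(v) there exists u < v adjacent to v with c(u) = j. Then c(v) < k · ⌈n^(1/k)⌉ for every vertex v; in particular First-Fit uses at most k · ⌈n^(1/k)⌉ colors on G. -/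
open SimpleGraph Walk

private lemma ff_edges_ne_of_path_ne {V : Type*} {G : SimpleGraph V} :
    ∀ {a v : V} (p q : G.Walk a v), p.IsPath → q.IsPath → p ≠ q →
      ∃ e ∈ p.edges, e ∉ q.edges := by
  intro a v p
  induction p with
  | nil =>
    intro q hp hq hne
    exact absurd ((Walk.isPath_iff_eq_nil (p := q)).mp hq).symm hne
  | @cons a b v h p' ih =>
    intro q hp hq hne
    cases q with
    | nil =>
      rw [Walk.isPath_iff_eq_nil] at hp
      exact absurd hp (by simp)
    | @cons _ b' _ h' q' =>
      by_cases hbb : b = b'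
      · subst hbb
        have hne' : p' ≠ q' := by
          intro hEq; apply hne; cases hEq; rfl
        obtain ⟨e, hep, heq⟩ := ih q' hp.of_cons hq.of_cons hne'
        refine ⟨e, by simp [Walk.edges_cons, hep], ?_⟩
        have hab : s(a, b) ∉ p'.edges := by
          intro hmem
          exact ((Walk.cons_isPath_iff h p').mp hp).2
            (Walk.fst_mem_support_of_mem_edges p' hmem)
        simp only [Walk.edges_cons, List.mem_cons, not_or]
        exact ⟨fun hEq => hab (hEq ▸ hep), heq⟩
      · refine ⟨s(a, b), by simp [Walk.edges_cons], ?_⟩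
        simp only [Walk.edges_cons, List.mem_cons, not_or]
        constructor
        · intro hEq
          exact hbb (Sym2.congr_right.mp hEq)
        · intro hmem
          exact ((Walk.cons_isPath_iff h' q').mp hq).2
            (Walk.fst_mem_support_of_mem_edges q' hmem)

private lemma ff_dart_split {V : Type*} {G : SimpleGraph V} :
    ∀ {a v : V} (p : G.Walk a v), p.IsTrail → ∀ d : G.Dart, d ∈ p.darts →
      ∃ (p1 : G.Walk a d.fst) (p2 : G.Walk d.snd v),
        p1.length + p2.length + 1 = p.length ∧ d.edge ∉ p1.edges ∧ d.edge ∉ p2.edges := by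
  intro a v p
  induction p with
  | nil => intro _ d hd; simp at hd
  | @cons a b v h p' ih =>
    intro hp d hd
    rw [Walk.darts_cons, List.mem_cons] at hd
    rcases hd with hd | hd
    · subst hd
      refine ⟨Walk.nil, p', by simp, by simp, ?_⟩
      have := (Walk.isTrail_cons h p').mp hp
      simpa using this.2
    · obtain ⟨p1', p2', hlen, he1, he2⟩ := ih hp.of_cons d hd
      have hde : d.edge ∈ p'.edges := List.mem_map_of_mem (f := Dart.edge) hd
      have hab : s(a, b) ∉ p'.edges := ((Walk.isTrail_cons h p').mp hp).2
      refine ⟨Walk.cons h p1', p2', by simp [Walk.length_cons] at hlen ⊢; omega, ?_, he2⟩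
      simp only [Walk.edges_cons, List.mem_cons, not_or]
      exact ⟨fun hEq => hab (hEq ▸ hde), he1⟩

private lemma ff_short_path_unique {V : Type*} [DecidableEq V] {G : SimpleGraph V} {k : ℕ}
    (hgirth : ∀ (x : V) (w : G.Walk x x), w.IsCycle → 2 * k < w.length)
    {a v : V} (p q : G.Walk a v) (hp : p.IsPath) (hq : q.IsPath)
    (hpl : p.length ≤ k) (hql : q.length ≤ k) : p = q := by
  by_contra hne
  obtain ⟨e, hep, heq⟩ := ff_edges_ne_of_path_ne p q hp hq hne
  obtain ⟨d, hd, hde⟩ : ∃ d ∈ p.darts, d.edge = e := by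
    simpa [Walk.edges] using hep
  subst hde
  obtain ⟨p1, p2, hlen, he1, he2⟩ := ff_dart_split p hp.isTrail d hd
  set W : G.Walk d.snd d.fst := p2.append (q.reverse.append p1) with hW
  have hWe : d.edge ∉ W.edges := by
    simp only [hW, Walk.edges_append, Walk.edges_reverse, List.mem_append, List.mem_reverse,
      not_or]
    exact ⟨he2, heq, he1⟩
  have hWl : W.length + 1 ≤ 2 * k := by
    have : W.length = p2.length + (q.length + p1.length) := by
      simp [hW, Walk.length_append, Walk.length_reverse]
    omega
  have hedge : s(d.fst, d.snd) = d.edge := rfl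
  have hcyc : (Walk.cons d.adj W.bypass).IsCycle := by
    refine SimpleGraph.Path.cons_isCycle ⟨W.bypass, W.bypass_isPath⟩ d.adj ?_
    intro hmem
    exact hWe (W.edges_bypass_subset (hedge ▸ hmem))
  have := hgirth d.fst (Walk.cons d.adj W.bypass) hcyc
  have hb := W.length_bypass_le
  simp only [Walk.length_cons] at this
  omega


open Classical in
private noncomputable def ffNode {n : ℕ} (G : SimpleGraph (Fin n)) (c : Fin n → ℕ)
    (k m : ℕ) (v : Fin n) : List (Fin m) → Fin n
  | [] => v
  | i :: s =>
    if h : ∃ u, u < ffNode G c k m v s ∧ G.Adj u (ffNode G c k m v s) ∧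
        c u = (k - (s.length + 1)) * m + i.val then h.choose
    else ffNode G c k m v s

private lemma ffNode_key {n k m : ℕ} {G : SimpleGraph (Fin n)} {c : Fin n → ℕ} {v : Fin n}
    (hff : ∀ v : Fin n, ∀ j < c v, ∃ u : Fin n, u < v ∧ G.Adj u v ∧ c u = j)
    (hcv : k * m ≤ c v) :
    ∀ s : List (Fin m), s.length ≤ k →
      ((k - s.length) * m ≤ c (ffNode G c k m v s)) ∧
      (∀ (i : Fin m) (s' : List (Fin m)), s = i :: s' →
          c (ffNode G c k m v s) = (k - s.length) * m + i.val) ∧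
      ∃ w : G.Walk (ffNode G c k m v s) v, w.IsPath ∧ w.length = s.length ∧
        w.support = s.tails.map (ffNode G c k m v) ∧
        ∀ u ∈ w.support, ffNode G c k m v s ≤ u := by
  intro s
  induction s with
  | nil =>
    intro _
    have h0 : ffNode G c k m v [] = v := rfl
    refine ⟨by simpa [h0] using hcv, fun i s' h => absurd h (by simp), ?_⟩
    refine ⟨(SimpleGraph.Walk.nil).copy h0.symm rfl, by simp, by simp, ?_, ?_⟩
    · simp [SimpleGraph.Walk.support_copy, h0]
    · intro u hu
      simp [SimpleGraph.Walk.support_copy] at hu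
      simp [h0, hu]
  | cons i s ih =>
    intro hlen
    have hlen' : s.length ≤ k := by simp at hlen; omega
    obtain ⟨hc, -, w, hwp, hwl, hws, hwb⟩ := ih hlen'
    have hj : (k - (s.length + 1)) * m + i.val < c (ffNode G c k m v s) := by
      refine lt_of_lt_of_le ?_ hc
      have hks : k - s.length = (k - (s.length + 1)) + 1 := by
        simp at hlen; omega
      rw [hks, add_mul, one_mul]
      exact Nat.add_lt_add_left i.isLt _
    have hex : ∃ u, u < ffNode G c k m v s ∧ G.Adj u (ffNode G c k m v s) ∧
        c u = (k - (s.length + 1)) * m + i.val := hff _ _ hj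
    have hnode : ffNode G c k m v (i :: s) = hex.choose := by
      simp only [ffNode, dif_pos hex]
    have spec := hex.choose_spec
    rw [← hnode] at spec
    obtain ⟨hlt, hadj, hcol⟩ := spec
    refine ⟨?_, ?_, ?_⟩
    · rw [List.length_cons, hcol]
      exact Nat.le_add_right _ _
    · intro i' s' h
      injection h with h1 h2
      subst h1; subst h2
      simp [hcol]
    · refine ⟨SimpleGraph.Walk.cons hadj w, ?_, ?_, ?_, ?_⟩
      · rw [SimpleGraph.Walk.cons_isPath_iff]
        refine ⟨hwp, fun hmem => ?_⟩
        exact absurd (hwb _ hmem) (not_le.mpr hlt)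
      · simp [hwl]
      · rw [SimpleGraph.Walk.support_cons, hws, List.tails_cons, List.map_cons]
      · intro u hu
        rw [SimpleGraph.Walk.support_cons, List.mem_cons] at hu
        rcases hu with rfl | hu
        · exact le_refl _
        · exact le_of_lt (lt_of_lt_of_le hlt (hwb u hu))


private lemma ffNode_recover {n k m : ℕ} {G : SimpleGraph (Fin n)} {c : Fin n → ℕ} {v : Fin n}
    (hff : ∀ v : Fin n, ∀ j < c v, ∃ u : Fin n, u < v ∧ G.Adj u v ∧ c u = j)
    (hcv : k * m ≤ c v) :
    ∀ s t : List (Fin m), s.length ≤ k → t.length ≤ k →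
      s.tails.map (ffNode G c k m v) = t.tails.map (ffNode G c k m v) → s = t := by
  intro s
  induction s with
  | nil =>
    intro t _ _ hsup
    have hl : (0 : ℕ) + 1 = t.length + 1 := by
      have := congrArg List.length hsup
      simpa [List.length_tails] using this
    cases t with
    | nil => rfl
    | cons j t' => simp at hl
  | cons i s ih =>
    intro t hsl htl hsup
    have hlent := congrArg List.length hsup
    simp [List.length_tails] at hlent
    cases t with
    | nil => simp at hlent
    | cons j t' =>
      simp only [List.tails_cons, List.map_cons] at hsup
      obtain ⟨hhead, htail⟩ := List.cons.injEq _ _ _ _ ▸ hsup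
      have hst : s = t' := by
        apply ih t' (by simp at hsl; omega) (by simp at htl; omega) htail
      subst hst
      have h1 := (ffNode_key hff hcv (i :: s) hsl).2.1 i s rfl
      have h2 := (ffNode_key hff hcv (j :: s) htl).2.1 j s rfl
      rw [hhead, h2] at h1
      simp only [List.length_cons] at h1
      have : i = j := Fin.ext (by omega)
      rw [this]

private lemma ffNode_inj {n k m : ℕ} {G : SimpleGraph (Fin n)} {c : Fin n → ℕ} {v : Fin n}
    (hgirth : ∀ (x : Fin n) (w : G.Walk x x), w.IsCycle → 2 * k < w.length)
    (hff : ∀ v : Fin n, ∀ j < c v, ∃ u : Fin n, u < v ∧ G.Adj u v ∧ c u = j)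
    (hcv : k * m ≤ c v) (s t : List (Fin m)) (hsl : s.length ≤ k) (htl : t.length ≤ k)
    (h : ffNode G c k m v s = ffNode G c k m v t) : s = t := by
  obtain ⟨-, -, ws, hwsp, hwsl, hwss, -⟩ := ffNode_key hff hcv s hsl
  obtain ⟨-, -, wt, hwtp, hwtl, hwts, -⟩ := ffNode_key hff hcv t htl
  have huniq := ff_short_path_unique hgirth ws (wt.copy h.symm rfl) hwsp
    (by rwa [SimpleGraph.Walk.isPath_copy]) (by omega)
    (by rw [SimpleGraph.Walk.length_copy]; omega)
  have hsup : ws.support = wt.support := by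
    rw [huniq, SimpleGraph.Walk.support_copy]
  rw [hwss, hwts] at hsup
  exact ffNode_recover hff hcv s t hsl htl hsup


/-- First-Fit uses at most `k · ⌈n^(1/k)⌉` colors on an `n`-vertex graph of girth at
least `2k + 1` (colors are natural numbers starting from 0, so every color is
`< k · ⌈n^(1/k)⌉`). -/
theorem firstFit_of_girth (k n : ℕ) (hk : 1 ≤ k) (hn : 1 ≤ n)
    (G : SimpleGraph (Fin n))
    (hgirth : ∀ (v : Fin n) (w : G.Walk v v), w.IsCycle → 2 * k < w.length)
    (c : Fin n → ℕ)
    (hproper : ∀ v u : Fin n, u < v → G.Adj u v → c u ≠ c v)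
    (hff : ∀ v : Fin n, ∀ j < c v, ∃ u : Fin n, u < v ∧ G.Adj u v ∧ c u = j) :
    ∀ v : Fin n, c v < k * ⌈(n : ℝ) ^ (1 / (k : ℝ))⌉₊ := by
  intro v
  by_contra hlt
  push_neg at hlt
  set m : ℕ := ⌈(n : ℝ) ^ (1 / (k : ℝ))⌉₊ with hm
  have hk0 : (k : ℝ) ≠ 0 := Nat.cast_ne_zero.mpr (by omega)
  have hnm : n ≤ m ^ k := by
    have h1 : (n : ℝ) ^ (1 / (k : ℝ)) ≤ (m : ℝ) := Nat.le_ceil _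
    have hnn : (0 : ℝ) ≤ (n : ℝ) ^ (1 / (k : ℝ)) := Real.rpow_nonneg (by positivity) _
    have h2 : (n : ℝ) ≤ (m : ℝ) ^ k := by
      calc (n : ℝ) = ((n : ℝ) ^ (1 / (k : ℝ))) ^ (k : ℕ) := by
            rw [← Real.rpow_natCast ((n : ℝ) ^ (1 / (k : ℝ))) k, ← Real.rpow_mul (by positivity),
              one_div_mul_cancel hk0, Real.rpow_one]
        _ ≤ (m : ℝ) ^ (k : ℕ) := pow_le_pow_left₀ hnn h1 k
    exact_mod_cast h2
  -- injection from Option (Fin k → Fin m) into Fin n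
  have hcv : k * m ≤ c v := hlt
  have hlen : ∀ f : Fin k → Fin m, (List.ofFn f).length = k := fun f => List.length_ofFn (f := f)
  have hcolor : ∀ f : Fin k → Fin m, c (ffNode G c k m v (List.ofFn f)) < k * m := by
    intro f
    have hne : List.ofFn f ≠ [] := by
      intro h
      have := congrArg List.length h
      simp [hlen] at this
      omega
    obtain ⟨i, s', hcons⟩ := List.exists_cons_of_ne_nil hne
    have := (ffNode_key hff hcv (List.ofFn f) (by rw [hlen])).2.1 i s' hcons
    rw [this, hlen]
    have him : (i : ℕ) < m := i.isLt
    have : k - k = 0 := by omega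
    rw [this]
    have : 1 * m ≤ k * m := Nat.mul_le_mul_right m hk
    omega
  have hinj : Function.Injective (fun o : Option (Fin k → Fin m) =>
      Option.elim o v (fun f => ffNode G c k m v (List.ofFn f))) := by
    intro o1 o2 h
    match o1, o2 with
    | none, none => rfl
    | some f, some g =>
      simp only [Option.elim] at h
      have := ffNode_inj hgirth hff hcv _ _ (le_of_eq (hlen f)) (le_of_eq (hlen g)) h
      rw [List.ofFn_inj] at this
      rw [this]
    | none, some f =>
      exfalso
      simp only [Option.elim] at h
      have := hcolor f
      rw [← h] at this
      omega
    | some f, none =>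
      exfalso
      simp only [Option.elim] at h
      have := hcolor f
      rw [h] at this
      omega
  have hcard := Fintype.card_le_of_injective _ hinj
  simp [Fintype.card_option, Fintype.card_fun, Fintype.card_fin] at hcard
  omega
end

section
/- Let k ≥ 1 and d ≥ 1 be integers and let G be a finite simple graph containing no cycle of length at most 2k. Let S₁, S₂, …, S_{k+1} be pairwise disjoint sets of vertices of G such that for every i with 2 ≤ i ≤ k+1, every vertex of S_i has at least d neighbors in S_{i−1}. If S_{k+1} is nonempty, then |S₁| ≥ d^k. -/
open SimpleGraph Walk

section Aux

variable {V : Type*} {G : SimpleGraph V}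

private lemma loop_path_eq_nil {v : V} (p : G.Walk v v) (hp : p.IsPath) : p = Walk.nil := by
  cases p with
  | nil => rfl
  | cons h q =>
    rw [Walk.cons_isPath_iff] at hp
    exact absurd q.end_mem_support hp.2

private lemma loop_len_zero_eq_nil {v : V} (p : G.Walk v v) (hp : p.length = 0) :
    p = Walk.nil := by
  cases p with
  | nil => rfl
  | cons h q => simp [Walk.length_cons] at hp

private lemma path_length_one_of_edge {v w : V} {p : G.Walk v w} (hp : p.IsPath)
    (he : s(v, w) ∈ p.edges) : p.length = 1 := by
  cases p with
  | nil => simp at he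
  | @cons _ x _ h q =>
    rw [Walk.edges_cons, List.mem_cons] at he
    rw [Walk.cons_isPath_iff] at hp
    rcases he with he | he
    · have hwx : w = x := by
        rcases Sym2.eq_iff.mp he with ⟨-, h2⟩ | ⟨h1, -⟩
        · exact h2
        · exact absurd h1 h.ne
      subst hwx
      rw [loop_path_eq_nil q hp.1]
      simp
    · exact absurd (q.fst_mem_support_of_mem_edges he) hp.2

private lemma path_eq_of_length_one {v w : V} (p q : G.Walk v w)
    (hp : p.length = 1) (hq : q.length = 1) : p = q := by
  cases p with
  | nil => simp at hp
  | @cons _ x _ h p' =>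
    cases q with
    | nil => simp at hq
    | @cons _ y _ h' q' =>
      rw [Walk.length_cons] at hp hq
      have hp0 : p'.length = 0 := by omega
      have hq0 : q'.length = 0 := by omega
      have hx : x = w := Walk.eq_of_length_eq_zero hp0
      have hy : y = w := Walk.eq_of_length_eq_zero hq0
      subst hx
      subst hy
      rw [loop_len_zero_eq_nil p' hp0, loop_len_zero_eq_nil q' hq0]

private lemma isPath_concat {u v w : V} {p : G.Walk u v} (hp : p.IsPath) (h : G.Adj v w)
    (hw : w ∉ p.support) : (p.concat h).IsPath := by
  apply Walk.IsPath.mk'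
  rw [Walk.support_concat]
  refine List.Nodup.append hp.support_nodup (by simp) ?_
  intro x hx1 hx2
  simp only [List.mem_singleton] at hx2
  subst hx2
  exact hw hx1

private lemma cycle_of_two_paths :
    ∀ (t : ℕ) {v w : V} (p q : G.Walk v w), p.length + q.length ≤ t →
      p.IsPath → q.IsPath → p ≠ q →
      ∃ (u : V) (c : G.Walk u u), c.IsCycle ∧ c.length ≤ p.length + q.length := by
  intro t
  classical
  induction t with
  | zero =>
    intro v w p q hlen hp hq hpq
    exfalso
    have hv : v = w := Walk.eq_of_length_eq_zero (p := p) (by omega)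
    subst hv
    rw [loop_path_eq_nil p hp, loop_path_eq_nil q hq] at hpq
    exact hpq rfl
  | succ t ih =>
    intro v w p q hlen hp hq hpq
    by_cases hvw : v = w
    · subst hvw
      rw [loop_path_eq_nil p hp, loop_path_eq_nil q hq] at hpq
      exact absurd rfl hpq
    by_cases hint : ∃ x, ∃ (_ : x ∈ p.support), x ∈ q.support ∧ x ≠ v ∧ x ≠ w
    · obtain ⟨x, hxp, hxq, hxv, hxw⟩ := hint
      have hpsplit : (p.takeUntil x hxp).append (p.dropUntil x hxp) = p := p.take_spec hxp
      have hqsplit : (q.takeUntil x hxq).append (q.dropUntil x hxq) = q := q.take_spec hxq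
      have hplen : (p.takeUntil x hxp).length + (p.dropUntil x hxp).length = p.length := by
        have := congrArg Walk.length hpsplit
        rwa [Walk.length_append] at this
      have hqlen : (q.takeUntil x hxq).length + (q.dropUntil x hxq).length = q.length := by
        have := congrArg Walk.length hqsplit
        rwa [Walk.length_append] at this
      have h1 : 0 < (p.takeUntil x hxp).length :=
        Nat.pos_of_ne_zero fun h => hxv (Walk.eq_of_length_eq_zero h).symm
      have h2 : 0 < (p.dropUntil x hxp).length :=
        Nat.pos_of_ne_zero fun h => hxw (Walk.eq_of_length_eq_zero h)
      have h3 : 0 < (q.takeUntil x hxq).length :=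
        Nat.pos_of_ne_zero fun h => hxv (Walk.eq_of_length_eq_zero h).symm
      have h4 : 0 < (q.dropUntil x hxq).length :=
        Nat.pos_of_ne_zero fun h => hxw (Walk.eq_of_length_eq_zero h)
      by_cases h12 : p.takeUntil x hxp = q.takeUntil x hxq
      · by_cases h22 : p.dropUntil x hxp = q.dropUntil x hxq
        · exfalso
          apply hpq
          rw [← hpsplit, ← hqsplit, h12, h22]
        · obtain ⟨u, c, hc, hcl⟩ := ih (p.dropUntil x hxp) (q.dropUntil x hxq) (by omega)
            (hp.dropUntil hxp) (hq.dropUntil hxq) h22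
          exact ⟨u, c, hc, by omega⟩
      · obtain ⟨u, c, hc, hcl⟩ := ih (p.takeUntil x hxp) (q.takeUntil x hxq) (by omega)
          (hp.takeUntil hxp) (hq.takeUntil hxq) h12
        exact ⟨u, c, hc, by omega⟩
    · push_neg at hint
      have hshare : ∀ x ∈ p.support, x ∈ q.support → x = v ∨ x = w := by
        intro x hx hxq
        by_cases hxv : x = v
        · exact Or.inl hxv
        · exact Or.inr (hint x hx hxq hxv)
      have hpl : 0 < p.length := Nat.pos_of_ne_zero fun h => hvw (Walk.eq_of_length_eq_zero h)
      have hql : 0 < q.length := Nat.pos_of_ne_zero fun h => hvw (Walk.eq_of_length_eq_zero h)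
      have hed : ∀ e ∈ p.edges, e ∉ q.edges := by
        have key : ∀ a b : V, s(a, b) ∈ p.edges → s(a, b) ∈ q.edges → False := by
          intro a b hap haq
          have hadj : G.Adj a b := p.edges_subset_edgeSet hap
          have ha := hshare a (p.fst_mem_support_of_mem_edges hap)
            (q.fst_mem_support_of_mem_edges haq)
          have hb := hshare b (p.snd_mem_support_of_mem_edges hap)
            (q.snd_mem_support_of_mem_edges haq)
          have hevw : (s(a, b) : Sym2 V) = s(v, w) := by
            rcases ha with rfl | rfl <;> rcases hb with rfl | rfl
            · exact absurd rfl hadj.ne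
            · rfl
            · exact Sym2.eq_swap
            · exact absurd rfl hadj.ne
          rw [hevw] at hap haq
          have hp1 := path_length_one_of_edge hp hap
          have hq1 := path_length_one_of_edge hq haq
          exact hpq (path_eq_of_length_one p q hp1 hq1)
        intro e
        induction e using Sym2.ind with
        | _ a b => exact key a b
      have hptail : p.support.tail.Nodup ∧ v ∉ p.support.tail := by
        have h := hp.support_nodup
        rw [p.support_eq_cons] at h
        exact ⟨(List.nodup_cons.mp h).2, (List.nodup_cons.mp h).1⟩
      have hrtail : q.reverse.support.tail.Nodup ∧ w ∉ q.reverse.support.tail := by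
        have h := hq.reverse.support_nodup
        rw [q.reverse.support_eq_cons] at h
        exact ⟨(List.nodup_cons.mp h).2, (List.nodup_cons.mp h).1⟩
      refine ⟨v, p.append q.reverse, ?_, by rw [Walk.length_append, Walk.length_reverse]⟩
      rw [Walk.isCycle_def]
      refine ⟨⟨?_⟩, ?_, ?_⟩
      · rw [Walk.edges_append, Walk.edges_reverse]
        refine List.Nodup.append hp.isTrail.edges_nodup (List.nodup_reverse.mpr hq.isTrail.edges_nodup) ?_
        intro e hep heq
        rw [List.mem_reverse] at heq
        exact hed e hep heq
      · intro hnil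
        have h0 : (p.append q.reverse).length = 0 := by rw [hnil]; rfl
        rw [Walk.length_append, Walk.length_reverse] at h0
        omega
      · rw [Walk.support_append, p.support_eq_cons, List.cons_append, List.tail_cons]
        refine List.Nodup.append hptail.1 hrtail.1 ?_
        intro x hx1 hx2
        have hx1' : x ∈ p.support := List.mem_of_mem_tail hx1
        have hx2' : x ∈ q.support := by
          have : x ∈ q.reverse.support := List.mem_of_mem_tail hx2
          rwa [Walk.support_reverse, List.mem_reverse] at this
        rcases hshare x hx1' hx2' with rfl | rfl
        · exact hptail.2 hx1
        · exact hrtail.2 hx2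

end Aux

/-- In a finite graph with no cycle of length at most `2k`, if the pairwise disjoint
vertex sets `S 1, …, S (k+1)` are such that every vertex of `S i` (for `2 ≤ i ≤ k+1`)
has at least `d` neighbors in `S (i-1)`, and `S (k+1)` is nonempty, then
`|S 1| ≥ d^k`. -/
theorem layered_sets_of_girth {V : Type*} [Fintype V] (G : SimpleGraph V)
    (k d : ℕ) (hk : 1 ≤ k) (hd : 1 ≤ d)
    (hgirth : ∀ (v : V) (w : G.Walk v v), w.IsCycle → 2 * k < w.length)
    (S : ℕ → Set V)
    (hdisj : ∀ i j : ℕ, 1 ≤ i → i ≤ k + 1 → 1 ≤ j → j ≤ k + 1 → i ≠ j →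
      Disjoint (S i) (S j))
    (hdeg : ∀ i : ℕ, 2 ≤ i → i ≤ k + 1 → ∀ v ∈ S i,
      d ≤ (G.neighborSet v ∩ S (i - 1)).ncard)
    (hne : (S (k + 1)).Nonempty) :
    d ^ k ≤ (S 1).ncard := by
  classical
  obtain ⟨v, hv⟩ := hne
  have key : ∀ j, j ≤ k → ∃ A : Finset V,
      d ^ j ≤ A.card ∧ ∀ u ∈ A, u ∈ S (k + 1 - j) ∧ ∃ p : G.Walk v u,
        p.IsPath ∧ p.length = j ∧ ∀ x ∈ p.support, ∃ m, m ≤ j ∧ x ∈ S (k + 1 - m) := by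
    intro j
    induction j with
    | zero =>
      intro _
      refine ⟨{v}, by simp, ?_⟩
      intro u hu
      rw [Finset.mem_singleton] at hu
      subst hu
      refine ⟨by simpa using hv, Walk.nil, Walk.IsPath.nil, rfl, ?_⟩
      intro x hx
      rw [Walk.support_nil, List.mem_singleton] at hx
      subst hx
      exact ⟨0, le_rfl, by simpa using hv⟩
    | succ j ih =>
      intro hjk
      obtain ⟨A, hcard, hA⟩ := ih (by omega)
      -- each u ∈ A lies in S (k+1-j), which has index ≥ 2, so has ≥ d neighbours in S (k-j)
      set f : V → Finset V := fun u => (G.neighborSet u ∩ S (k - j)).toFinite.toFinset with hf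
      have hmemf : ∀ u w, w ∈ f u ↔ G.Adj u w ∧ w ∈ S (k - j) := by
        intro u w
        rw [hf, Set.Finite.mem_toFinset]
        exact Iff.rfl
      have hfcard : ∀ u ∈ A, d ≤ (f u).card := by
        intro u hu
        have hu1 := (hA u hu).1
        have h2 : 2 ≤ k + 1 - j := by omega
        have h3 : k + 1 - j ≤ k + 1 := by omega
        have := hdeg (k + 1 - j) h2 h3 u hu1
        have heq : k + 1 - j - 1 = k - j := by omega
        rw [heq] at this
        rwa [Set.ncard_eq_toFinset_card _ (G.neighborSet u ∩ S (k - j)).toFinite] at this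
      -- a vertex of S (k - j) is not on any of the paths
      have hnotsupp : ∀ u ∈ A, ∀ (p : G.Walk v u),
          (∀ x ∈ p.support, ∃ m, m ≤ j ∧ x ∈ S (k + 1 - m)) →
          ∀ w ∈ S (k - j), w ∉ p.support := by
        intro u hu p hsupp w hw hwp
        obtain ⟨m, hm, hxm⟩ := hsupp w hwp
        have hne' : k + 1 - m ≠ k - j := by omega
        have hdis := hdisj (k + 1 - m) (k - j) (by omega) (by omega) (by omega) (by omega) hne'
        exact Set.disjoint_left.mp hdis hxm hw
      -- disjointness of the neighbourhoods
      have hdisjf : ∀ u ∈ A, ∀ u' ∈ A, u ≠ u' → Disjoint (f u) (f u') := by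
        intro u hu u' hu' hne'
        rw [Finset.disjoint_left]
        intro w hwu hwu'
        obtain ⟨hadj, hwS⟩ := (hmemf u w).mp hwu
        obtain ⟨hadj', _⟩ := (hmemf u' w).mp hwu'
        obtain ⟨hu1, p, hp, hplen, hpsupp⟩ := hA u hu
        obtain ⟨hu1', p', hp', hplen', hpsupp'⟩ := hA u' hu'
        have hwp : w ∉ p.support := hnotsupp u hu p hpsupp w hwS
        have hwp' : w ∉ p'.support := hnotsupp u' hu' p' hpsupp' w hwS
        have huw : u ≠ w := by
          intro h
          subst h
          have hne'' : k + 1 - j ≠ k - j := by omega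
          exact Set.disjoint_left.mp
            (hdisj (k + 1 - j) (k - j) (by omega) (by omega) (by omega) (by omega) hne'') hu1 hwS
        -- the two extended paths
        have hpc : (p.concat hadj).IsPath := isPath_concat hp hadj hwp
        have hpc' : (p'.concat hadj').IsPath := isPath_concat hp' hadj' hwp'
        have hnepc : p.concat hadj ≠ p'.concat hadj' := by
          intro h
          have hedges := congrArg Walk.edges h
          rw [Walk.edges_concat, Walk.edges_concat, List.concat_eq_append,
            List.concat_eq_append] at hedges
          have hmem : s(u, w) ∈ p'.edges ++ [s(u', w)] := by
            rw [← hedges]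
            simp
          rw [List.mem_append, List.mem_singleton] at hmem
          rcases hmem with hmem | hmem
          · exact hwp' (p'.snd_mem_support_of_mem_edges hmem)
          · rcases Sym2.eq_iff.mp hmem with ⟨h1, -⟩ | ⟨h1, -⟩
            · exact hne' h1
            · exact huw h1
        obtain ⟨z, c, hc, hcl⟩ := cycle_of_two_paths (2 * k) (p.concat hadj) (p'.concat hadj')
          (by rw [Walk.length_concat, Walk.length_concat, hplen, hplen']; omega)
          hpc hpc' hnepc
        have := hgirth z c hc
        rw [Walk.length_concat, Walk.length_concat, hplen, hplen'] at hcl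
        omega
      refine ⟨A.biUnion f, ?_, ?_⟩
      · rw [Finset.card_biUnion hdisjf]
        calc d ^ (j + 1) = d ^ j * d := by ring
          _ ≤ A.card * d := Nat.mul_le_mul_right d hcard
          _ ≤ ∑ u ∈ A, (f u).card := by
              rw [← smul_eq_mul]
              exact Finset.card_nsmul_le_sum A _ d hfcard
      · intro w hw
        rw [Finset.mem_biUnion] at hw
        obtain ⟨u, hu, hwu⟩ := hw
        obtain ⟨hadj, hwS⟩ := (hmemf u w).mp hwu
        obtain ⟨hu1, p, hp, hplen, hpsupp⟩ := hA u hu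
        have hwp : w ∉ p.support := hnotsupp u hu p hpsupp w hwS
        have hkj : k + 1 - (j + 1) = k - j := by omega
        refine ⟨by rwa [hkj], p.concat hadj, isPath_concat hp hadj hwp, ?_, ?_⟩
        · rw [Walk.length_concat, hplen]
        · intro x hx
          rw [Walk.support_concat, List.mem_append,
            List.mem_singleton] at hx
          rcases hx with hx | rfl
          · obtain ⟨m, hm, hxm⟩ := hpsupp x hx
            exact ⟨m, by omega, hxm⟩
          · exact ⟨j + 1, le_rfl, by rwa [hkj]⟩
  obtain ⟨A, hcard, hA⟩ := key k le_rfl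
  have hsub : (A : Set V) ⊆ S 1 := by
    intro u hu
    have h1 := (hA u hu).1
    have : k + 1 - k = 1 := by omega
    rwa [this] at h1
  calc d ^ k ≤ A.card := hcard
    _ = (A : Set V).ncard := (Set.ncard_coe_finset A).symm
    _ ≤ (S 1).ncard := Set.ncard_le_ncard hsub (Set.toFinite _)
end

section
/- Let k ≥ 1 be an integer and let G be a simple graph containing no cycle of length at most 2k. Then for every pair of vertices u and v of G, there is at most one path from u to v of length at most k; that is, any two paths from u to v each of length at most k are equal. -/
open SimpleGraph Walk

private lemma path_unique_aux {V : Type*} (G : SimpleGraph V) (k : ℕ)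
    (hgirth : ∀ (v : V) (w : G.Walk v v), w.IsCycle → 2 * k < w.length) :
    ∀ n u v (p q : G.Walk u v), p.IsPath → q.IsPath →
      p.length ≤ k → q.length ≤ k → p.length + q.length ≤ n → p = q := by
  classical
  intro n
  induction n using Nat.strong_induction_on with
  | _ n IH =>
  intro u v p q hp hq hpk hqk hn
  by_cases huv : u = v
  · subst huv
    rw [Walk.isPath_iff_eq_nil.mp hp, Walk.isPath_iff_eq_nil.mp hq]
  by_cases hx : ∃ x, x ∈ p.support ∧ x ∈ q.support ∧ x ≠ u ∧ x ≠ v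
  · obtain ⟨x, hxp, hxq, hxu, hxv⟩ := hx
    have hsp := congrArg Walk.length (p.take_spec hxp)
    have hsq := congrArg Walk.length (q.take_spec hxq)
    rw [Walk.length_append] at hsp hsq
    have hdp : 1 ≤ (p.dropUntil x hxp).length := by
      rcases Nat.eq_zero_or_pos (p.dropUntil x hxp).length with h | h
      · exact absurd (Walk.eq_of_length_eq_zero h) hxv
      · exact h
    have hdq : 1 ≤ (q.dropUntil x hxq).length := by
      rcases Nat.eq_zero_or_pos (q.dropUntil x hxq).length with h | h
      · exact absurd (Walk.eq_of_length_eq_zero h) hxv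
      · exact h
    have htp : 1 ≤ (p.takeUntil x hxp).length := by
      rcases Nat.eq_zero_or_pos (p.takeUntil x hxp).length with h | h
      · exact absurd (Walk.eq_of_length_eq_zero h) (Ne.symm hxu)
      · exact h
    have htq : 1 ≤ (q.takeUntil x hxq).length := by
      rcases Nat.eq_zero_or_pos (q.takeUntil x hxq).length with h | h
      · exact absurd (Walk.eq_of_length_eq_zero h) (Ne.symm hxu)
      · exact h
    have htake : p.takeUntil x hxp = q.takeUntil x hxq := by
      refine IH ((p.takeUntil x hxp).length + (q.takeUntil x hxq).length) (by omega)
        u x _ _ (hp.takeUntil hxp) (hq.takeUntil hxq) (by omega) (by omega) le_rfl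
    have hdrop : p.dropUntil x hxp = q.dropUntil x hxq := by
      refine IH ((p.dropUntil x hxp).length + (q.dropUntil x hxq).length) (by omega)
        x v _ _ (hp.dropUntil hxp) (hq.dropUntil hxq) (by omega) (by omega) le_rfl
    rw [← p.take_spec hxp, ← q.take_spec hxq, htake, hdrop]
  · push_neg at hx
    by_contra hne
    -- p is not nil since u ≠ v
    cases p with
    | nil => exact huv rfl
    | @cons _ b _ h p' =>
      rw [Walk.cons_isPath_iff] at hp
      obtain ⟨hp', hup'⟩ := hp
      -- intersection facts
      have hmem : ∀ y, y ∈ p'.support → y ∈ q.support → y = v := by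
        intro y hy1 hy2
        have : y ∈ (Walk.cons h p').support := by
          rw [Walk.support_cons]; exact List.mem_cons_of_mem _ hy1
        rcases eq_or_ne y u with rfl | hyu
        · exact absurd hy1 hup'
        · exact hx y this hy2 hyu
      -- the closed walk
      have hpath : (p'.append q.reverse).IsPath := by
        rw [Walk.isPath_def, Walk.support_append]
        have h1 : p'.support.Nodup := hp'.support_nodup
        have h2 : q.reverse.support.tail.Nodup := (List.tail_sublist _).nodup hq.reverse.support_nodup
        refine h1.append h2 ?_
        intro y hy1 hy2
        have hyq : y ∈ q.support := by
          have : y ∈ q.reverse.support := by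
            rw [Walk.support_eq_cons q.reverse]
            exact List.mem_cons_of_mem _ hy2
          rwa [Walk.support_reverse, List.mem_reverse] at this
        have hyv : y = v := hmem y hy1 hyq
        subst hyv
        have : y ∉ q.reverse.support.tail := by
          have hnd : q.reverse.support.Nodup := hq.reverse.support_nodup
          rw [Walk.support_eq_cons q.reverse] at hnd
          exact (List.nodup_cons.mp hnd).1
        exact this hy2
      have hedge : s(u, b) ∉ (p'.append q.reverse).edges := by
        rw [Walk.edges_append, List.mem_append]
        rintro (he | he)
        · exact hup' (Walk.fst_mem_support_of_mem_edges _ he)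
        · rw [Walk.edges_reverse, List.mem_reverse] at he
          have hbq : b ∈ q.support := Walk.snd_mem_support_of_mem_edges _ he
          have hbv : b = v := hmem b p'.start_mem_support hbq
          subst hbv
          -- p' : Walk v v is a path, hence nil; p = cons h nil
          have hp'nil : p' = Walk.nil := Walk.isPath_iff_eq_nil.mp hp'
          subst hp'nil
          -- q contains edge s(u,v); show q = cons h' nil
          cases q with
          | nil => exact huv rfl
          | @cons _ c _ h'' q'' =>
            rw [Walk.cons_isPath_iff] at hq
            obtain ⟨hq'', huq''⟩ := hq
            rw [Walk.edges_cons, List.mem_cons] at he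
            rcases he with he | he
            · have hc : c = b := by
                rw [Sym2.eq_iff] at he
                rcases he with ⟨-, rfl⟩ | ⟨rfl, rfl⟩
                · rfl
                · exact absurd rfl (G.ne_of_adj h)
              subst hc
              have : q'' = Walk.nil := Walk.isPath_iff_eq_nil.mp hq''
              subst this
              exact hne rfl
            · exact huq'' (Walk.fst_mem_support_of_mem_edges _ he)
      have hcyc : (Walk.cons h (p'.append q.reverse)).IsCycle :=
        (Walk.cons_isCycle_iff _ _).mpr ⟨hpath, hedge⟩
      have hlen := hgirth u _ hcyc
      rw [Walk.length_cons, Walk.length_append, Walk.length_reverse] at hlen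
      rw [Walk.length_cons] at hpk
      omega

/-- In a graph with no cycle of length at most `2k`, any two paths between the same
pair of vertices, each of length at most `k`, coincide. -/
theorem path_unique_of_girth {V : Type*} (G : SimpleGraph V) (k : ℕ) (hk : 1 ≤ k)
    (hgirth : ∀ (v : V) (w : G.Walk v v), w.IsCycle → 2 * k < w.length) :
    ∀ (u v : V) (p q : G.Walk u v), p.IsPath → q.IsPath →
      p.length ≤ k → q.length ≤ k → p = q := by
  intro u v p q hp hq hpk hqk
  exact path_unique_aux G k hgirth (p.length + q.length) u v p q hp hq hpk hqk le_rfl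
end

section
/- Let d ≥ 0 be an even integer and let G be a simple graph containing no cycle of odd length at most d + 3. Let X be a set of vertices of G with even-diameter at most d, i.e. for every two vertices x, y ∈ X there is a walk in G from x to y of even length at most d. Then the set of all vertices adjacent to at least one vertex of X is an independent set: if y₁ is adjacent to some x₁ ∈ X and y₂ is adjacent to some x₂ ∈ X, then y₁ and y₂ are not adjacent in G. -/
open SimpleGraph Walk

/-- Any closed walk of odd length contains an odd cycle of length at most the walk's length. -/
lemma exists_odd_cycle_of_odd_closed_walk {V : Type*} (G : SimpleGraph V) :
    ∀ (n : ℕ) (v : V) (w : G.Walk v v), w.length = n → Odd n →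
      ∃ (u : V) (c : G.Walk u u), c.IsCycle ∧ Odd c.length ∧ c.length ≤ n := by
  classical
  intro n
  induction n using Nat.strong_induction_on with
  | _ n ih =>
  intro v w hlen hodd
  have hpos : 0 < n := hodd.pos
  -- w is nonempty
  cases w with
  | nil => simp at hlen; omega
  | cons h p =>
    rename_i y
    -- h : G.Adj v y, p : G.Walk y v
    by_cases hnd : p.support.Nodup
    · -- internal vertices distinct
      by_cases he : s(v, y) ∈ p.edges
      · -- the first edge reappears: peel p
        cases p with
        | nil => simp at he
        | cons h2 q =>
          rename_i z
          -- h2 : G.Adj y z, q : G.Walk z v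
          rw [Walk.edges_cons, List.mem_cons] at he
          rcases he with he | he
          · -- s(v,y) = s(y,z), so v = z
            have hvz : v = z := by
              rw [Sym2.eq_iff] at he
              rcases he with ⟨hvy, hyz⟩ | ⟨hvz, -⟩
              · exact absurd hvy (G.ne_of_adj h)
              · exact hvz
            subst hvz
            -- q : G.Walk v v of length n - 2
            have hql : q.length = n - 2 := by
              simp [Walk.length_cons] at hlen; omega
            have hn2 : n - 2 < n := by omega
            have h1n : n ≠ 1 := by
              intro h1
              subst h1
              simp [Walk.length_cons] at hlen
            have : Odd (n - 2) := by
              rcases hodd with ⟨k, hk⟩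
              exact ⟨k - 1, by omega⟩
            obtain ⟨u, c, hc, hco, hcl⟩ := ih (n - 2) hn2 v q hql this
            exact ⟨u, c, hc, hco, hcl.trans (by omega)⟩
          · -- y appears twice in support: contradiction with nodup
            exfalso
            have hy : y ∈ q.support := by
              have := Walk.fst_mem_support_of_mem_edges q (Sym2.eq_swap ▸ he)
              exact this
            have : (Walk.cons h2 q).support.Nodup := hnd
            rw [Walk.support_cons, List.nodup_cons] at this
            exact this.1 hy
      · -- we have a genuine cycle
        refine ⟨v, Walk.cons h p, ?_, ?_, ?_⟩
        · rw [Walk.cons_isCycle_iff]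
          exact ⟨Walk.IsPath.mk' hnd, he⟩
        · rw [hlen]; exact hodd
        · omega
    · -- a vertex repeats internally: split into two shorter closed walks
      obtain ⟨u, hu⟩ := List.exists_duplicate_iff_not_nodup.mpr hnd
      have hucount : 2 ≤ p.support.count u := List.duplicate_iff_two_le_count.mp hu
      have huw : u ∈ (Walk.cons h p).support := by
        rw [Walk.support_cons]
        exact List.mem_cons_of_mem _ hu.mem
      set w' := (Walk.cons h p).rotate u huw with hw'
      have hw'len : w'.length = n := by
        have hr : w'.edges ~r (Walk.cons h p).edges := Walk.rotate_edges _ u huw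
        have hlen2 : w'.edges.length = (Walk.cons h p).edges.length := hr.perm.length_eq
        rwa [Walk.length_edges, Walk.length_edges, hlen] at hlen2
      have hcount' : 2 ≤ w'.support.tail.count u := by
        have hrot : w'.support.tail ~r (Walk.cons h p).support.tail :=
          Walk.support_rotate _ u huw
        rw [hrot.perm.count_eq]
        simpa using hucount
      cases hw'' : w' with
      | nil =>
        rw [hw''] at hw'len
        simp at hw'len; omega
      | cons h' p' =>
        rename_i y'
        -- h' : G.Adj u y', p' : G.Walk y' u
        rw [hw''] at hcount' hw'len
        rw [Walk.support_cons] at hcount'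
        simp only [List.tail_cons] at hcount'
        have hup' : u ∈ p'.support := by
          by_contra hcon
          rw [List.count_eq_zero_of_not_mem hcon] at hcount'; omega
        set t := p'.takeUntil u hup' with ht
        set dd := p'.dropUntil u hup' with hd
        have hsplit : t.append dd = p' := p'.take_spec hup'
        have hlensum : t.length + dd.length = p'.length := by
          have := congrArg Walk.length hsplit
          rwa [Walk.length_append] at this
        have hdpos : 1 ≤ dd.length := by
          by_contra hcon
          have hdd0 : dd.length = 0 := by omega
          have hsupp : p'.support = t.support ++ dd.support.tail := by
            rw [← hsplit, Walk.support_append]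
          have hddtail : dd.support.tail = [] := by
            have := Walk.length_support dd
            rw [hdd0] at this
            cases hds : dd.support with
            | nil => simp [hds] at this
            | cons a l => rw [hds] at this; simp at this; simp [this]
          have : p'.support.count u = 1 := by
            rw [hsupp, hddtail, List.append_nil]
            exact p'.count_support_takeUntil_eq_one hup'
          omega
        -- two closed walks at u
        have hw'len2 : 1 + p'.length = n := by
          simpa [Walk.length_cons, Nat.add_comm] using hw'len
        have hsum : (1 + t.length) + dd.length = n := by omega
        have hodd2 : Odd (1 + t.length) ∨ Odd dd.length := by
          rcases Nat.even_or_odd (1 + t.length) with h1 | h1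
          · right
            rcases hodd with ⟨k, hk⟩
            rcases h1 with ⟨m, hm⟩
            exact Nat.odd_iff.mpr (by omega)
          · left; exact h1
        rcases hodd2 with hcase | hcase
        · have hlt : 1 + t.length < n := by omega
          obtain ⟨a, c, hc, hco, hcl⟩ :=
            ih (1 + t.length) hlt u (Walk.cons h' t) (by simp [Walk.length_cons]; omega) hcase
          exact ⟨a, c, hc, hco, by omega⟩
        · have hlt : dd.length < n := by omega
          obtain ⟨a, c, hc, hco, hcl⟩ := ih dd.length hlt u dd rfl hcase
          exact ⟨a, c, hc, hco, by omega⟩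

/-- If `G` has no odd cycle of length at most `d + 3` and `X` has even-diameter at most
`d` (every two vertices of `X` are joined by an even walk of length at most `d`), then
the neighborhood of `X` is an independent set. -/
theorem neighborhood_independent_of_even_diameter {V : Type*} (G : SimpleGraph V)
    (d : ℕ) (hd : Even d)
    (hgirth : ∀ (v : V) (w : G.Walk v v), w.IsCycle → Odd w.length → d + 3 < w.length)
    (X : Set V)
    (hX : ∀ x ∈ X, ∀ y ∈ X, ∃ w : G.Walk x y, Even w.length ∧ w.length ≤ d) :
    ∀ y₁ y₂ x₁ x₂ : V, x₁ ∈ X → x₂ ∈ X → G.Adj y₁ x₁ → G.Adj y₂ x₂ →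
      ¬ G.Adj y₁ y₂ := by
  intro y₁ y₂ x₁ x₂ hx₁ hx₂ h1 h2 hy
  obtain ⟨ww, hwe, hwl⟩ := hX x₁ hx₁ x₂ hx₂
  -- closed walk x₁ → y₁ → y₂ → x₂ → x₁ of odd length 3 + ww.length ≤ d + 3
  set c : G.Walk x₁ x₁ :=
    Walk.cons h1.symm (Walk.cons hy (Walk.cons h2 ww.reverse)) with hc
  have hclen : c.length = 3 + ww.length := by
    simp [hc, Walk.length_cons, Walk.length_reverse]; omega
  have hcodd : Odd c.length := by
    rw [hclen]
    rcases hwe with ⟨k, hk⟩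
    exact ⟨k + 1, by omega⟩
  obtain ⟨u, cyc, hcyc, hcycodd, hcycle⟩ :=
    exists_odd_cycle_of_odd_closed_walk G c.length x₁ c rfl hcodd
  have := hgirth u cyc hcyc hcycodd
  omega
end

section
/- Let G be a simple graph, let d ≥ 0 be an even integer, and let m ≥ 0 be an even integer. Let X₀, X₁, …, X_m be sets of vertices of G, each of even-diameter at most d, i.e. for every two vertices x, y in the same X_i there is a walk in G from x to y of even length at most d. Suppose that for every i with 0 ≤ i < m there exist vertices y_i and z_{i+1} of G such that y_i is adjacent to some vertex of X_i, z_{i+1} is adjacent to some vertex of X_{i+1}, and y_i is adjacent to z_{i+1}. Then for every u ∈ X₀ and v ∈ X_m there is a walk in G from u to v of even length at most (d+3)(m+1) − 3. -/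
lemma merged_sets_aux {V : Type*} (G : SimpleGraph V)
    (d m : ℕ)
    (X : ℕ → Set V)
    (hX : ∀ i ≤ m, ∀ x ∈ X i, ∀ y ∈ X i,
      ∃ w : G.Walk x y, Even w.length ∧ w.length ≤ d)
    (hlink : ∀ i < m, ∃ y z : V,
      (∃ x ∈ X i, G.Adj y x) ∧ (∃ x ∈ X (i + 1), G.Adj z x) ∧ G.Adj y z) :
    ∀ k ≤ m, ∀ u ∈ X 0, ∀ v ∈ X k,
      ∃ w : G.Walk u v, w.length % 2 = k % 2 ∧ w.length ≤ d * (k + 1) + 3 * k := by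
  intro k
  induction k with
  | zero =>
    intro _ u hu v hv
    obtain ⟨w, hev, hle⟩ := hX 0 (Nat.zero_le m) u hu v hv
    exact ⟨w, by rw [Nat.even_iff] at hev; omega, by omega⟩
  | succ k ih =>
    intro hk u hu v hv
    obtain ⟨y, z, ⟨x, hx, hyx⟩, ⟨x', hx', hzx'⟩, hyz⟩ := hlink k (by omega)
    obtain ⟨w1, hp1, hl1⟩ := ih (by omega) u hu x hx
    obtain ⟨w2, hev2, hl2⟩ := hX (k + 1) hk x' hx' v hv
    refine ⟨w1.append (SimpleGraph.Walk.cons hyx.symm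
      (SimpleGraph.Walk.cons hyz (SimpleGraph.Walk.cons hzx' w2))), ?_, ?_⟩ <;>
      simp only [SimpleGraph.Walk.length_append, SimpleGraph.Walk.length_cons] <;>
      rw [Nat.even_iff] at hev2 <;>
      · have h : d * (k + 1 + 1) = d * (k + 1) + d := by ring
        omega

/-- Merging a chain of sets `X 0, …, X m`, each of even-diameter at most `d`, where
consecutive sets are linked by a pair of adjacent vertices respectively adjacent to the
two sets, yields even walks of length at most `(d+3)(m+1) − 3` from `X 0` to `X m`. -/
theorem merged_sets_even_diameter {V : Type*} (G : SimpleGraph V)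
    (d m : ℕ) (hd : Even d) (hm : Even m)
    (X : ℕ → Set V)
    (hX : ∀ i ≤ m, ∀ x ∈ X i, ∀ y ∈ X i,
      ∃ w : G.Walk x y, Even w.length ∧ w.length ≤ d)
    (hlink : ∀ i < m, ∃ y z : V,
      (∃ x ∈ X i, G.Adj y x) ∧ (∃ x ∈ X (i + 1), G.Adj z x) ∧ G.Adj y z) :
    ∀ u ∈ X 0, ∀ v ∈ X m,
      ∃ w : G.Walk u v, Even w.length ∧ w.length ≤ (d + 3) * (m + 1) - 3 := by
  intro u hu v hv
  obtain ⟨w, hp, hl⟩ := merged_sets_aux G d m X hX hlink m le_rfl u hu v hv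
  rw [Nat.even_iff] at hm
  have h : (d + 3) * (m + 1) = d * (m + 1) + 3 * m + 3 := by ring
  exact ⟨w, Nat.even_iff.mpr (by omega), by omega⟩
end
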